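/- On the set of relations r : X ⟶ Y between two fixed classical structures, the binary relation defined by r ≤ s iff r = r ⋆ s (where ⋆ is convolution) is a partial order: it is reflexive, transitive and antisymmetric. -/

import Mathlib

open CategoryTheory MonoidalCategory

universe v u

variable {C : Type u} [Category.{v} C] [MonoidalCategory C] [SymmetricCategory C]

/-- A dagger structure on a symmetric monoidal category: an involutive,
identity-on-objects, contravariant functor that coherently preserves the
symmetric monoidal structure. -/
structure Dagger (C : Type u) [Category.{v} C] [MonoidalCategory C]
    [SymmetricCategory C] where
  dag : ∀ {A B : C}, (A ⟶ B) → (B ⟶ A)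
  dag_comp : ∀ {A B E : C} (f : A ⟶ B) (g : B ⟶ E), dag (f ≫ g) = dag g ≫ dag f
  dag_id : ∀ A : C, dag (𝟙 A) = 𝟙 A
  dag_dag : ∀ {A B : C} (f : A ⟶ B), dag (dag f) = f
  dag_tensor : ∀ {A B A' B' : C} (f : A ⟶ B) (g : A' ⟶ B'),
    dag (f ⊗ₘ g) = dag f ⊗ₘ dag g
  dag_assoc : ∀ A B E : C, dag (α_ A B E).hom = (α_ A B E).inv
  dag_lUnit : ∀ A : C, dag (λ_ A).hom = (λ_ A).inv
  dag_rUnit : ∀ A : C, dag (ρ_ A).hom = (ρ_ A).inv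
  dag_braid : ∀ A B : C, dag (β_ A B).hom = (β_ A B).inv

/-- Positivity of an endomorphism: `e = g† ≫ g` for some `g : W ⟶ A`. -/
def Dagger.IsPositive (D : Dagger C) {A : C} (e : A ⟶ A) : Prop :=
  ∃ (W : C) (g : W ⟶ A), e = D.dag g ≫ g

/-- A classical structure: a commutative monoid object which, together with the
daggers of its multiplication and unit, is a special Frobenius algebra. -/
structure ClassicalStructure (D : Dagger C) (X : C) where
  mul : X ⊗ X ⟶ X
  unit : 𝟙_ C ⟶ X
  mul_assoc' : (α_ X X X).hom ≫ (𝟙 X ⊗ₘ mul) ≫ mul = (mul ⊗ₘ 𝟙 X) ≫ mul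
  one_mul' : (unit ⊗ₘ 𝟙 X) ≫ mul = (λ_ X).hom
  mul_one' : (𝟙 X ⊗ₘ unit) ≫ mul = (ρ_ X).hom
  mul_comm' : (β_ X X).hom ≫ mul = mul
  frobenius' : (𝟙 X ⊗ₘ D.dag mul) ≫ (α_ X X X).inv ≫ (mul ⊗ₘ 𝟙 X) = mul ≫ D.dag mul
  special' : D.dag mul ≫ mul = 𝟙 X

namespace ClassicalStructure

variable {D : Dagger C}

/-- The comultiplication `Δ := ∇†`. -/
def comul {X : C} (S : ClassicalStructure D X) : X ⟶ X ⊗ X := D.dag S.mul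

/-- The counit `⊤ := ⊥†`. -/
def counit {X : C} (S : ClassicalStructure D X) : X ⟶ 𝟙_ C := D.dag S.unit

/-- The induced Bell state `η := ⊥ ≫ Δ`. -/
def eta {X : C} (S : ClassicalStructure D X) : 𝟙_ C ⟶ X ⊗ X := S.unit ≫ S.comul

/-- The induced Bell costate `ε := ∇ ≫ ⊤`. -/
def eps {X : C} (S : ClassicalStructure D X) : X ⊗ X ⟶ 𝟙_ C := S.mul ≫ S.counit

/-- The decoherence `Ξ := ∇ ≫ Δ`. -/
def Xi {X : C} (S : ClassicalStructure D X) : X ⊗ X ⟶ X ⊗ X := S.mul ≫ S.comul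

end ClassicalStructure

/-- A morphism `f : X ⟶ Y` between classical structures is classical if
`(Δ_X ⊗ 𝟙_Y) ≫ (𝟙_X ⊗ f ⊗ 𝟙_Y) ≫ (𝟙_X ⊗ ∇_Y)` is positive. -/
def IsClassical {X Y : C} (D : Dagger C) (XS : ClassicalStructure D X)
    (YS : ClassicalStructure D Y) (f : X ⟶ Y) : Prop :=
  D.IsPositive ((XS.comul ⊗ₘ 𝟙 Y) ≫ ((𝟙 X ⊗ₘ f) ⊗ₘ 𝟙 Y) ≫ (α_ X Y Y).hom ≫ (𝟙 X ⊗ₘ YS.mul))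

/-- The conjugate `f_* := (η_Y ⊗ 𝟙_X) ≫ (𝟙_Y ⊗ f† ⊗ 𝟙_X) ≫ (𝟙_Y ⊗ ε_X)`. -/
def conjugate {X Y : C} (D : Dagger C) (XS : ClassicalStructure D X)
    (YS : ClassicalStructure D Y) (f : X ⟶ Y) : X ⟶ Y :=
  (λ_ X).inv ≫ (YS.eta ⊗ₘ 𝟙 X) ≫ (α_ Y Y X).hom ≫ (𝟙 Y ⊗ₘ (D.dag f ⊗ₘ 𝟙 X)) ≫
    (𝟙 Y ⊗ₘ XS.eps) ≫ (ρ_ Y).hom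

/-- The convolution `f ⋆ g := Δ_X ≫ (f_* ⊗ g) ≫ ∇_Y`. -/
def convol {X Y : C} (D : Dagger C) (XS : ClassicalStructure D X)
    (YS : ClassicalStructure D Y) (f g : X ⟶ Y) : X ⟶ Y :=
  XS.comul ≫ (conjugate D XS YS f ⊗ₘ g) ≫ YS.mul

/-- A relation is a convolution-idempotent: `r = r ⋆ r`. -/
def IsRelation {X Y : C} (D : Dagger C) (XS : ClassicalStructure D X)
    (YS : ClassicalStructure D Y) (r : X ⟶ Y) : Prop :=
  r = convol D XS YS r r

/-- Single-valuedness: `r ≫ Δ_Y = Δ_X ≫ (r ⊗ r)`. -/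
def SingleValued {X Y : C} (D : Dagger C) (XS : ClassicalStructure D X)
    (YS : ClassicalStructure D Y) (r : X ⟶ Y) : Prop :=
  r ≫ YS.comul = XS.comul ≫ (r ⊗ₘ r)

/-- Totality: `r ≫ ⊤_Y = ⊤_X`. -/
def TotalRel {X Y : C} (D : Dagger C) (XS : ClassicalStructure D X)
    (YS : ClassicalStructure D Y) (r : X ⟶ Y) : Prop :=
  r ≫ YS.counit = XS.counit

/-- A function is a single-valued total relation. -/
def IsFunctionRel {X Y : C} (D : Dagger C) (XS : ClassicalStructure D X)
    (YS : ClassicalStructure D Y) (r : X ⟶ Y) : Prop :=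
  IsRelation D XS YS r ∧ SingleValued D XS YS r ∧ TotalRel D XS YS r

/-- The middle-four interchange `(X ⊗ Y) ⊗ (Z ⊗ W) ⟶ (X ⊗ Z) ⊗ (Y ⊗ W)`
built from associators and the braiding. -/
def midSwap (X Y Z W : C) : (X ⊗ Y) ⊗ (Z ⊗ W) ⟶ (X ⊗ Z) ⊗ (Y ⊗ W) :=
  (α_ X Y (Z ⊗ W)).hom ≫ (𝟙 X ⊗ₘ (α_ Y Z W).inv) ≫ (𝟙 X ⊗ₘ ((β_ Y Z).hom ⊗ₘ 𝟙 W)) ≫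
    (𝟙 X ⊗ₘ (α_ Z Y W).hom) ≫ (α_ X Z (Y ⊗ W)).inv

/-- The multiplication `∇_{X⊗Y} := (𝟙_X ⊗ β_{Y,X} ⊗ 𝟙_Y) ≫ (∇_X ⊗ ∇_Y)` of the
tensor of two classical structures. -/
def tensorMul {X Y : C} {D : Dagger C} (XS : ClassicalStructure D X)
    (YS : ClassicalStructure D Y) : (X ⊗ Y) ⊗ (X ⊗ Y) ⟶ X ⊗ Y :=
  midSwap X Y X Y ≫ (XS.mul ⊗ₘ YS.mul)

/-- The unit `⊥_{X⊗Y} := ⊥_X ⊗ ⊥_Y` of the tensor of two classical structures. -/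
def tensorUnit'' {X Y : C} {D : Dagger C} (XS : ClassicalStructure D X)
    (YS : ClassicalStructure D Y) : 𝟙_ C ⟶ X ⊗ Y :=
  (λ_ (𝟙_ C)).inv ≫ (XS.unit ⊗ₘ YS.unit)

/-- Complete positivity of `g : X ⊗ X ⟶ Y ⊗ Y` relative to the self-dual compact
structures induced by the classical structures:
`(𝟙_X ⊗ η_X ⊗ 𝟙_Y) ≫ (𝟙_X ⊗ g ⊗ 𝟙_Y) ≫ (𝟙_{X⊗Y} ⊗ ε_Y)` is positive. -/
def IsCP {X Y : C} (D : Dagger C) (XS : ClassicalStructure D X)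
    (YS : ClassicalStructure D Y) (g : X ⊗ X ⟶ Y ⊗ Y) : Prop :=
  D.IsPositive ((𝟙 X ⊗ₘ (λ_ Y).inv) ≫ (𝟙 X ⊗ₘ (XS.eta ⊗ₘ 𝟙 Y)) ≫ (𝟙 X ⊗ₘ (g ⊗ₘ 𝟙 Y)) ≫
    (𝟙 X ⊗ₘ (α_ Y Y Y).hom) ≫ (α_ X Y (Y ⊗ Y)).inv ≫ (𝟙 (X ⊗ Y) ⊗ₘ YS.eps) ≫
    (ρ_ (X ⊗ Y)).hom)

/-- A stochastic morphism: classical and total. -/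
def Stochastic {X Y : C} (D : Dagger C) (XS : ClassicalStructure D X)
    (YS : ClassicalStructure D Y) (s : X ⟶ Y) : Prop :=
  IsClassical D XS YS s ∧ TotalRel D XS YS s

/-- A doubly stochastic morphism: both `s` and `s†` are stochastic. -/
def DoublyStochastic {X Y : C} (D : Dagger C) (XS : ClassicalStructure D X)
    (YS : ClassicalStructure D Y) (s : X ⟶ Y) : Prop :=
  Stochastic D XS YS s ∧ Stochastic D YS XS (D.dag s)

section Toolkit

variable {D : Dagger C}

lemma braid_self_inv (A : C) : (β_ A A).inv = (β_ A A).hom := by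
  rw [← cancel_epi (β_ A A).hom, Iso.hom_inv_id, SymmetricCategory.symmetry]

namespace Dagger

lemma dag_assoc_inv (D : Dagger C) (A B E : C) :
    D.dag (α_ A B E).inv = (α_ A B E).hom := by
  have h := congrArg D.dag (D.dag_assoc A B E)
  rw [D.dag_dag] at h; exact h.symm

lemma dag_lUnit_inv (D : Dagger C) (A : C) : D.dag (λ_ A).inv = (λ_ A).hom := by
  have h := congrArg D.dag (D.dag_lUnit A)
  rw [D.dag_dag] at h; exact h.symm

lemma dag_rUnit_inv (D : Dagger C) (A : C) : D.dag (ρ_ A).inv = (ρ_ A).hom := by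
  have h := congrArg D.dag (D.dag_rUnit A)
  rw [D.dag_dag] at h; exact h.symm

lemma dag_braid_inv (D : Dagger C) (A B : C) :
    D.dag (β_ A B).inv = (β_ A B).hom := by
  have h := congrArg D.dag (D.dag_braid A B)
  rw [D.dag_dag] at h; exact h.symm

end Dagger

namespace ClassicalStructure

variable {A : C} (S : ClassicalStructure D A)

lemma dag_comul : D.dag S.comul = S.mul := by rw [comul, D.dag_dag]
lemma dag_counit : D.dag S.counit = S.unit := by rw [counit, D.dag_dag]
lemma dag_eta : D.dag S.eta = S.eps := by
  rw [eta, eps, D.dag_comp, dag_comul, counit]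
lemma dag_eps : D.dag S.eps = S.eta := by
  rw [eta, eps, D.dag_comp, dag_counit, comul]

lemma comul_braiding : S.comul ≫ (β_ A A).hom = S.comul := by
  have h := congrArg D.dag S.mul_comm'
  rw [D.dag_comp, D.dag_braid, braid_self_inv] at h
  rw [comul]; exact h

lemma comul_coassoc :
    S.comul ≫ (𝟙 A ⊗ₘ S.comul) ≫ (α_ A A A).inv = S.comul ≫ (S.comul ⊗ₘ 𝟙 A) := by
  have h := congrArg D.dag S.mul_assoc'
  simp only [D.dag_comp, D.dag_tensor, D.dag_id, D.dag_assoc] at h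
  simp only [comul]
  simpa [Category.assoc] using h

lemma comul_counit_left : S.comul ≫ (S.counit ⊗ₘ 𝟙 A) = (λ_ A).inv := by
  have h := congrArg D.dag S.one_mul'
  simp only [D.dag_comp, D.dag_tensor, D.dag_id, D.dag_lUnit] at h
  rw [comul, counit]; exact h

lemma comul_counit_right : S.comul ≫ (𝟙 A ⊗ₘ S.counit) = (ρ_ A).inv := by
  have h := congrArg D.dag S.mul_one'
  simp only [D.dag_comp, D.dag_tensor, D.dag_id, D.dag_rUnit] at h
  rw [comul, counit]; exact h

lemma frob2 :
    (S.comul ⊗ₘ 𝟙 A) ≫ (α_ A A A).hom ≫ (𝟙 A ⊗ₘ S.mul) = S.mul ≫ S.comul := by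
  have h := congrArg D.dag S.frobenius'
  simp only [D.dag_comp, D.dag_tensor, D.dag_id, D.dag_dag, D.dag_assoc_inv] at h
  simp only [comul]
  simpa [Category.assoc] using h

lemma psi1 :
    (𝟙 A ⊗ₘ S.eta) ≫ (α_ A A A).inv ≫ (S.mul ⊗ₘ 𝟙 A) = (ρ_ A).hom ≫ S.comul := by
  have hsplit : (𝟙 A ⊗ₘ S.eta) = (𝟙 A ⊗ₘ S.unit) ≫ (𝟙 A ⊗ₘ S.comul) := by
    rw [MonoidalCategory.tensorHom_comp_tensorHom, Category.id_comp, eta]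
  rw [hsplit, Category.assoc]
  have hfrob : (𝟙 A ⊗ₘ S.comul) ≫ (α_ A A A).inv ≫ (S.mul ⊗ₘ 𝟙 A) = S.mul ≫ S.comul := by
    simpa [comul] using S.frobenius'
  rw [hfrob, ← Category.assoc, S.mul_one']

lemma psi2 :
    (S.eta ⊗ₘ 𝟙 A) ≫ (α_ A A A).hom ≫ (𝟙 A ⊗ₘ S.mul) = (λ_ A).hom ≫ S.comul := by
  have hsplit : (S.eta ⊗ₘ 𝟙 A) = (S.unit ⊗ₘ 𝟙 A) ≫ (S.comul ⊗ₘ 𝟙 A) := by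
    rw [MonoidalCategory.tensorHom_comp_tensorHom, Category.id_comp, eta]
  rw [hsplit, Category.assoc, S.frob2, ← Category.assoc, S.one_mul']

lemma snake1 :
    (λ_ A).inv ≫ (S.eta ⊗ₘ 𝟙 A) ≫ (α_ A A A).hom ≫ (𝟙 A ⊗ₘ S.eps) ≫ (ρ_ A).hom = 𝟙 A := by
  have hsplit : (𝟙 A ⊗ₘ S.eps) = (𝟙 A ⊗ₘ S.mul) ≫ (𝟙 A ⊗ₘ S.counit) := by
    rw [MonoidalCategory.tensorHom_comp_tensorHom, Category.id_comp, eps]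
  rw [hsplit]
  slice_lhs 2 4 => rw [S.psi2]
  slice_lhs 3 4 => rw [S.comul_counit_right]
  simp

lemma snake2 :
    (ρ_ A).inv ≫ (𝟙 A ⊗ₘ S.eta) ≫ (α_ A A A).inv ≫ (S.eps ⊗ₘ 𝟙 A) ≫ (λ_ A).hom = 𝟙 A := by
  have hsplit : (S.eps ⊗ₘ 𝟙 A) = (S.mul ⊗ₘ 𝟙 A) ≫ (S.counit ⊗ₘ 𝟙 A) := by
    rw [MonoidalCategory.tensorHom_comp_tensorHom, Category.id_comp, eps]
  rw [hsplit]
  slice_lhs 2 4 => rw [S.psi1]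
  slice_lhs 3 4 => rw [S.comul_counit_left]
  simp

lemma eta_braiding : S.eta ≫ (β_ A A).hom = S.eta := by
  rw [eta, Category.assoc, S.comul_braiding]

lemma braiding_eps : (β_ A A).hom ≫ S.eps = S.eps := by
  rw [eps, ← Category.assoc, S.mul_comm']

lemma eta_coassoc :
    S.eta ≫ (S.comul ⊗ₘ 𝟙 A) ≫ (α_ A A A).hom = S.eta ≫ (𝟙 A ⊗ₘ S.comul) := by
  have h := S.comul_coassoc
  rw [← cancel_mono (α_ A A A).hom] at h
  simp only [Category.assoc, Iso.inv_hom_id, Category.comp_id] at h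
  simp only [eta, Category.assoc]
  rw [h]

end ClassicalStructure

end Toolkit
section Spider

variable {D : Dagger C}

lemma braid_unit (A : C) : (β_ A (𝟙_ C)).hom = (ρ_ A).hom ≫ (λ_ A).inv := by
  rw [← braiding_leftUnitor (C := C) A]; simp

lemma Jlemma {A P Q : C} (w : 𝟙_ C ⟶ P ⊗ Q) :
    (A ◁ w) ≫ (α_ A P Q).inv ≫ ((β_ A P).hom ▷ Q) ≫ (α_ P A Q).hom
      = (β_ A (𝟙_ C)).hom ≫ (w ▷ A) ≫ (α_ P Q A).hom ≫ (P ◁ (β_ A Q).inv) := by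
  have hex := BraidedCategory.hexagon_forward (C := C) A P Q
  have h2 : ((β_ A P).hom ▷ Q) ≫ (α_ P A Q).hom
      = (α_ A P Q).hom ≫ (β_ A (P ⊗ Q)).hom ≫ (α_ P Q A).hom ≫ (P ◁ (β_ A Q).inv) := by
    rw [← cancel_mono (P ◁ (β_ A Q).hom)]
    simp only [Category.assoc, ← hex]
    simp
  rw [h2]
  simp only [Iso.inv_hom_id_assoc]
  rw [← Category.assoc, BraidedCategory.braiding_naturality_right A w]
  simp [Category.assoc]

namespace ClassicalStructure

variable {A : C} (S : ClassicalStructure D A)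

lemma psi1' :
    (A ◁ S.eta) ≫ (α_ A A A).inv ≫ (S.mul ▷ A) = (ρ_ A).hom ≫ S.comul := by
  have := S.psi1; simpa [id_tensorHom, tensorHom_id] using this

lemma psi2' :
    (S.eta ▷ A) ≫ (α_ A A A).hom ≫ (A ◁ S.mul) = (λ_ A).hom ≫ S.comul := by
  have := S.psi2; simpa [id_tensorHom, tensorHom_id] using this

lemma eta_coassoc' :
    S.eta ≫ (S.comul ▷ A) ≫ (α_ A A A).hom = S.eta ≫ (A ◁ S.comul) := by
  have := S.eta_coassoc; simpa [id_tensorHom, tensorHom_id] using this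

lemma core2 :
    ((A ⊗ A) ◁ S.eta) ≫ midSwap A A A A ≫ (S.mul ▷ (A ⊗ A))
      = (ρ_ (A ⊗ A)).hom ≫ (S.comul ▷ A) ≫ (α_ A A A).hom ≫ (A ◁ (β_ A A).hom) := by
  have c1 : ((A ⊗ A) ◁ S.eta) ≫ midSwap A A A A ≫ (S.mul ▷ (A ⊗ A))
      = (α_ A A (𝟙_ C)).hom ≫
          (A ◁ ((A ◁ S.eta) ≫ (α_ A A A).inv ≫ ((β_ A A).hom ▷ A) ≫ (α_ A A A).hom)) ≫
          (α_ A A (A ⊗ A)).inv ≫ (S.mul ▷ (A ⊗ A)) := by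
    simp only [midSwap, id_tensorHom, tensorHom_id]
    coherence
  rw [c1, Jlemma, braid_self_inv, braid_unit]
  simp only [MonoidalCategory.whiskerLeft_comp, Category.assoc]
  have mv1 : (A ◁ (A ◁ (β_ A A).hom)) ≫ (α_ A A (A ⊗ A)).inv
      = (α_ A A (A ⊗ A)).inv ≫ ((A ⊗ A) ◁ (β_ A A).hom) := by coherence
  rw [reassoc_of% mv1, whisker_exchange]
  simp only [← Category.assoc]
  rw [cancel_mono]
  simp only [Category.assoc]
  have c4 : (α_ A A (𝟙_ C)).hom ≫ (A ◁ (ρ_ A).hom) ≫ (A ◁ (λ_ A).inv) ≫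
        (A ◁ (S.eta ▷ A)) ≫ (A ◁ (α_ A A A).hom) ≫ (α_ A A (A ⊗ A)).inv ≫
        (S.mul ▷ (A ⊗ A))
      = (ρ_ (A ⊗ A)).hom ≫ ((ρ_ A).inv ▷ A) ≫
        (((A ◁ S.eta) ≫ (α_ A A A).inv ≫ (S.mul ▷ A)) ▷ A) ≫ (α_ A A A).hom := by
    coherence
  rw [c4, psi1']
  simp [comp_whiskerRight_assoc]

lemma K_pure :
    (λ_ (𝟙_ C)).inv ≫ (S.eta ⊗ₘ S.eta) ≫ midSwap A A A A ≫ (S.mul ⊗ₘ 𝟙 (A ⊗ A))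
      = S.eta ≫ (𝟙 A ⊗ₘ S.comul) := by
  simp only [id_tensorHom, tensorHom_id]
  have step1 : (λ_ (𝟙_ C)).inv ≫ (S.eta ⊗ₘ S.eta)
      = S.eta ≫ (ρ_ (A ⊗ A)).inv ≫ ((A ⊗ A) ◁ S.eta) := by
    rw [MonoidalCategory.tensorHom_def]; coherence
  rw [← Category.assoc, step1]
  simp only [Category.assoc]
  rw [S.core2]
  simp only [Iso.inv_hom_id_assoc]
  rw [reassoc_of% S.eta_coassoc', ← MonoidalCategory.whiskerLeft_comp,
    S.comul_braiding]

lemma core2' :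
    ((A ⊗ A) ◁ S.eta) ≫ midSwap A A A A ≫ ((A ⊗ A) ◁ S.mul)
      = (ρ_ (A ⊗ A)).hom ≫ (A ◁ S.comul) ≫ (α_ A A A).inv := by
  have c1 : ((A ⊗ A) ◁ S.eta) ≫ midSwap A A A A ≫ ((A ⊗ A) ◁ S.mul)
      = (α_ A A (𝟙_ C)).hom ≫
          (A ◁ ((A ◁ S.eta) ≫ (α_ A A A).inv ≫ ((β_ A A).hom ▷ A) ≫ (α_ A A A).hom)) ≫
          (α_ A A (A ⊗ A)).inv ≫ ((A ⊗ A) ◁ S.mul) := by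
    simp only [midSwap, id_tensorHom, tensorHom_id]
    coherence
  rw [c1, Jlemma, braid_self_inv, braid_unit]
  simp only [MonoidalCategory.whiskerLeft_comp, Category.assoc]
  have mv1 : (A ◁ (A ◁ (β_ A A).hom)) ≫ (α_ A A (A ⊗ A)).inv
      = (α_ A A (A ⊗ A)).inv ≫ ((A ⊗ A) ◁ (β_ A A).hom) := by coherence
  rw [reassoc_of% mv1, ← MonoidalCategory.whiskerLeft_comp, S.mul_comm']
  have c4 : (α_ A A (𝟙_ C)).hom ≫ (A ◁ (ρ_ A).hom) ≫ (A ◁ (λ_ A).inv) ≫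
        (A ◁ (S.eta ▷ A)) ≫ (A ◁ (α_ A A A).hom) ≫ (α_ A A (A ⊗ A)).inv ≫
        ((A ⊗ A) ◁ S.mul)
      = (ρ_ (A ⊗ A)).hom ≫
        (A ◁ ((λ_ A).inv ≫ ((S.eta ▷ A) ≫ (α_ A A A).hom ≫ (A ◁ S.mul)))) ≫
        (α_ A A A).inv := by
    coherence
  rw [c4, psi2']
  simp

lemma Kstar_pure :
    (λ_ (𝟙_ C)).inv ≫ (S.eta ⊗ₘ S.eta) ≫ midSwap A A A A ≫ (𝟙 (A ⊗ A) ⊗ₘ S.mul)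
      = S.eta ≫ (S.comul ⊗ₘ 𝟙 A) := by
  simp only [id_tensorHom, tensorHom_id]
  have step1 : (λ_ (𝟙_ C)).inv ≫ (S.eta ⊗ₘ S.eta)
      = S.eta ≫ (ρ_ (A ⊗ A)).inv ≫ ((A ⊗ A) ◁ S.eta) := by
    rw [MonoidalCategory.tensorHom_def]; coherence
  rw [← Category.assoc, step1]
  simp only [Category.assoc]
  rw [S.core2']
  simp only [Iso.inv_hom_id_assoc]
  rw [← cancel_mono (α_ A A A).hom]
  simp only [Category.assoc, Iso.inv_hom_id, Category.comp_id]
  exact (S.eta_coassoc').symm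

end ClassicalStructure

end Spider
namespace RelAux

variable {D : Dagger C} {X Y : C} (XS : ClassicalStructure D X)
  (YS : ClassicalStructure D Y)

/-- Plain (conjugate-free) convolution. -/
def smul (a b : X ⟶ Y) : X ⟶ Y := XS.comul ≫ (a ⊗ₘ b) ≫ YS.mul

/-- The name of a morphism. -/
def nm (f : X ⟶ Y) : 𝟙_ C ⟶ X ⊗ Y := XS.eta ≫ (𝟙 X ⊗ₘ f)

lemma smul_comm (a b : X ⟶ Y) : smul XS YS a b = smul XS YS b a := by
  rw [smul, smul]
  conv_lhs => rw [← XS.comul_braiding]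
  rw [Category.assoc, ← BraidedCategory.braiding_naturality_assoc, YS.mul_comm']

lemma dag_smul (a b : X ⟶ Y) :
    D.dag (smul XS YS a b) = YS.comul ≫ (D.dag a ⊗ₘ D.dag b) ≫ XS.mul := by
  simp only [smul, D.dag_comp, D.dag_tensor, ClassicalStructure.comul,
    D.dag_dag, Category.assoc]

lemma smul_assoc (a b c : X ⟶ Y) :
    smul XS YS (smul XS YS a b) c = smul XS YS a (smul XS YS b c) := by
  have e1 : (smul XS YS a b ⊗ₘ c)
      = (XS.comul ⊗ₘ 𝟙 X) ≫ ((a ⊗ₘ b) ⊗ₘ c) ≫ (YS.mul ⊗ₘ 𝟙 Y) := by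
    simp only [smul, MonoidalCategory.tensorHom_comp_tensorHom, Category.comp_id,
      Category.id_comp]
  have e2 : (a ⊗ₘ smul XS YS b c)
      = (𝟙 X ⊗ₘ XS.comul) ≫ (a ⊗ₘ (b ⊗ₘ c)) ≫ (𝟙 Y ⊗ₘ YS.mul) := by
    simp only [smul, MonoidalCategory.tensorHom_comp_tensorHom, Category.comp_id,
      Category.id_comp]
  conv_lhs => rw [smul, e1]
  conv_rhs => rw [smul, e2]
  have h1 : XS.comul ≫ (XS.comul ⊗ₘ 𝟙 X)
      = XS.comul ≫ (𝟙 X ⊗ₘ XS.comul) ≫ (α_ X X X).inv := XS.comul_coassoc.symm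
  have h2 : (YS.mul ⊗ₘ 𝟙 Y) ≫ YS.mul = (α_ Y Y Y).hom ≫ (𝟙 Y ⊗ₘ YS.mul) ≫ YS.mul :=
    YS.mul_assoc'.symm
  simp only [Category.assoc]
  rw [reassoc_of% h1, ← associator_inv_naturality_assoc]
  have h3 : (α_ Y Y Y).inv ≫ (YS.mul ⊗ₘ 𝟙 Y) ≫ YS.mul = (𝟙 Y ⊗ₘ YS.mul) ≫ YS.mul := by
    rw [h2]; simp
  rw [h3]

end RelAux
namespace RelAux

variable {D : Dagger C} {X Y : C} (XS : ClassicalStructure D X)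
  (YS : ClassicalStructure D Y)

lemma snake2' {A : C} (S : ClassicalStructure D A) :
    (ρ_ A).inv ≫ (A ◁ S.eta) ≫ (α_ A A A).inv ≫ (S.eps ▷ A) ≫ (λ_ A).hom = 𝟙 A := by
  have := S.snake2; simpa [id_tensorHom, tensorHom_id] using this

lemma snake1' {A : C} (S : ClassicalStructure D A) :
    (λ_ A).inv ≫ (S.eta ▷ A) ≫ (α_ A A A).hom ≫ (A ◁ S.eps) ≫ (ρ_ A).hom = 𝟙 A := by
  have := S.snake1; simpa [id_tensorHom, tensorHom_id] using this

lemma nm_retract (f : X ⟶ Y) :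
    (ρ_ X).inv ≫ (X ◁ nm XS f) ≫ (α_ X X Y).inv ≫ (XS.eps ▷ Y) ≫ (λ_ Y).hom
      = f := by
  rw [nm]
  simp only [id_tensorHom, MonoidalCategory.whiskerLeft_comp, Category.assoc]
  have mv : (X ◁ (X ◁ f)) ≫ (α_ X X Y).inv = (α_ X X X).inv ≫ ((X ⊗ X) ◁ f) := by
    coherence
  rw [reassoc_of% mv, whisker_exchange_assoc, MonoidalCategory.leftUnitor_naturality]
  rw [reassoc_of% (snake2' XS)]

lemma nm_inj {f g : X ⟶ Y} (h : nm XS f = nm XS g) : f = g := by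
  rw [← nm_retract XS f, ← nm_retract XS g, h]

end RelAux
namespace RelAux

variable {D : Dagger C} {X Y : C} (XS : ClassicalStructure D X)
  (YS : ClassicalStructure D Y)

lemma swap_creation {P Q : C} (m : 𝟙_ C ⟶ P) (n : 𝟙_ C ⟶ Q) :
    m ≫ (ρ_ P).inv ≫ (P ◁ n) = n ≫ (λ_ Q).inv ≫ (m ▷ Q) := by
  have h1 : (λ_ (𝟙_ C)).inv ≫ (m ⊗ₘ n) = m ≫ (ρ_ P).inv ≫ (P ◁ n) := by
    rw [MonoidalCategory.tensorHom_def]; coherence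
  have h2 : (λ_ (𝟙_ C)).inv ≫ (m ⊗ₘ n) = n ≫ (λ_ Q).inv ≫ (m ▷ Q) := by
    rw [MonoidalCategory.tensorHom_def']; coherence
  rw [← h1, h2]

lemma bent_yank {M : C} (v : 𝟙_ C ⟶ M ⊗ X) :
    XS.eta ≫ (X ◁ ((λ_ X).inv ≫ (v ▷ X) ≫ (α_ M X X).hom ≫ (M ◁ XS.eps) ≫ (ρ_ M).hom))
      = v ≫ (β_ M X).hom := by
  rw [← cancel_mono (β_ X M).hom]
  have hsym : (β_ M X).hom ≫ (β_ X M).hom = 𝟙 _ := SymmetricCategory.symmetry M X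
  rw [Category.assoc, Category.assoc, hsym, Category.comp_id]
  rw [BraidedCategory.braiding_naturality_right, ← Category.assoc, XS.eta_braiding]
  -- goal : XS.eta ≫ (bracket ▷ X) = v
  have c1 : ((λ_ X).inv ≫ (v ▷ X) ≫ (α_ M X X).hom ≫ (M ◁ XS.eps) ≫ (ρ_ M).hom) ▷ X
      = (λ_ (X ⊗ X)).inv ≫ (v ▷ (X ⊗ X)) ≫ (α_ M X (X ⊗ X)).hom ≫
        (M ◁ (α_ X X X).inv) ≫ (M ◁ (XS.eps ▷ X)) ≫ (M ◁ (λ_ X).hom) := by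
    coherence
  rw [c1, ← reassoc_of% (swap_creation (m := v) (n := XS.eta))]
  have c3 : (ρ_ (M ⊗ X)).inv ≫ ((M ⊗ X) ◁ XS.eta) ≫ (α_ M X (X ⊗ X)).hom ≫
        (M ◁ (α_ X X X).inv) ≫ (M ◁ (XS.eps ▷ X)) ≫ (M ◁ (λ_ X).hom)
      = M ◁ ((ρ_ X).inv ≫ (X ◁ XS.eta) ≫ (α_ X X X).inv ≫ (XS.eps ▷ X) ≫ (λ_ X).hom) := by
    coherence
  rw [c3, snake2' XS]
  simp

lemma conj_fold (f : X ⟶ Y) :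
    conjugate D XS YS f
      = (λ_ X).inv ≫ ((YS.eta ≫ (Y ◁ D.dag f)) ▷ X) ≫ (α_ Y X X).hom ≫
        (Y ◁ XS.eps) ≫ (ρ_ Y).hom := by
  simp only [conjugate, id_tensorHom, tensorHom_id, comp_whiskerRight,
    MonoidalCategory.whiskerLeft_comp, Category.assoc]
  coherence

lemma nm_conj (f : X ⟶ Y) :
    nm XS (conjugate D XS YS f) = YS.eta ≫ (D.dag f ⊗ₘ 𝟙 Y) := by
  rw [nm, conj_fold, id_tensorHom, tensorHom_id]
  rw [bent_yank XS (YS.eta ≫ (Y ◁ D.dag f)), Category.assoc,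
    BraidedCategory.braiding_naturality_right, ← Category.assoc, YS.eta_braiding]

end RelAux
namespace RelAux

variable {D : Dagger C} {X Y : C} (XS : ClassicalStructure D X)
  (YS : ClassicalStructure D Y)

lemma dag_conj (f : X ⟶ Y) :
    D.dag (conjugate D XS YS f)
      = (ρ_ Y).inv ≫ (Y ◁ (XS.eta ≫ (f ▷ X))) ≫ (α_ Y Y X).inv ≫
        (YS.eps ▷ X) ≫ (λ_ X).hom := by
  simp only [conjugate, D.dag_comp, D.dag_tensor, D.dag_id, D.dag_dag,
    D.dag_assoc, D.dag_lUnit_inv, D.dag_rUnit, ClassicalStructure.dag_eta,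
    ClassicalStructure.dag_eps, Category.assoc]
  simp only [id_tensorHom, tensorHom_id, MonoidalCategory.whiskerLeft_comp,
    Category.assoc]

lemma bent_yank2 {N : C} (v : 𝟙_ C ⟶ Y ⊗ N) :
    YS.eta ≫ (((ρ_ Y).inv ≫ (Y ◁ v) ≫ (α_ Y Y N).inv ≫ (YS.eps ▷ N) ≫ (λ_ N).hom) ▷ Y)
      = v ≫ (β_ Y N).hom := by
  rw [← cancel_mono (β_ N Y).hom]
  have hsym : (β_ Y N).hom ≫ (β_ N Y).hom = 𝟙 _ := SymmetricCategory.symmetry Y N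
  rw [Category.assoc, Category.assoc, hsym, Category.comp_id]
  rw [BraidedCategory.braiding_naturality_left, ← Category.assoc, YS.eta_braiding]
  -- goal : YS.eta ≫ (Y ◁ W) = v
  have c1 : Y ◁ ((ρ_ Y).inv ≫ (Y ◁ v) ≫ (α_ Y Y N).inv ≫ (YS.eps ▷ N) ≫ (λ_ N).hom)
      = (ρ_ (Y ⊗ Y)).inv ≫ ((Y ⊗ Y) ◁ v) ≫ (α_ Y Y (Y ⊗ N)).hom ≫
        (Y ◁ (α_ Y Y N).inv) ≫ (Y ◁ (YS.eps ▷ N)) ≫ (Y ◁ (λ_ N).hom) := by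
    coherence
  rw [c1, reassoc_of% (swap_creation (m := YS.eta) (n := v))]
  have c3 : (λ_ (Y ⊗ N)).inv ≫ (YS.eta ▷ (Y ⊗ N)) ≫ (α_ Y Y (Y ⊗ N)).hom ≫
        (Y ◁ (α_ Y Y N).inv) ≫ (Y ◁ (YS.eps ▷ N)) ≫ (Y ◁ (λ_ N).hom)
      = ((λ_ Y).inv ≫ (YS.eta ▷ Y) ≫ (α_ Y Y Y).hom ≫ (Y ◁ YS.eps) ≫ (ρ_ Y).hom) ▷ N := by
    coherence
  rw [c3, snake1' YS]
  simp

lemma conj_conj (f : X ⟶ Y) :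
    conjugate D XS YS (conjugate D XS YS f) = f := by
  apply nm_inj XS
  rw [nm_conj, dag_conj, tensorHom_id]
  have fold : Y ◁ (XS.eta ≫ (f ▷ X)) = (Y ◁ XS.eta) ≫ (Y ◁ (f ▷ X)) :=
    MonoidalCategory.whiskerLeft_comp _ _ _
  rw [bent_yank2 YS (XS.eta ≫ (f ▷ X)), nm, Category.assoc,
    BraidedCategory.braiding_naturality_left, ← Category.assoc, XS.eta_braiding,
    id_tensorHom]

end RelAux
namespace RelAux

variable {D : Dagger C} {X Y : C} (XS : ClassicalStructure D X)
  (YS : ClassicalStructure D Y)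

lemma midSwap_eq (A B P Q : C) : midSwap A B P Q = tensorμ A B P Q := by
  simp [midSwap, tensorμ, id_tensorHom, tensorHom_id]

lemma nm_smul (a b : X ⟶ Y) :
    nm XS (smul XS YS a b)
      = (λ_ (𝟙_ C)).inv ≫ (nm XS a ⊗ₘ nm XS b) ≫ midSwap X Y X Y ≫
        (XS.mul ⊗ₘ YS.mul) := by
  conv_rhs => rw [nm, nm]
  have e1 : (XS.eta ≫ (𝟙 X ⊗ₘ a)) ⊗ₘ (XS.eta ≫ (𝟙 X ⊗ₘ b))
      = (XS.eta ⊗ₘ XS.eta) ≫ ((𝟙 X ⊗ₘ a) ⊗ₘ (𝟙 X ⊗ₘ b)) := by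
    rw [MonoidalCategory.tensorHom_comp_tensorHom]
  rw [e1, midSwap_eq]
  have e2 : ((𝟙 X ⊗ₘ a) ⊗ₘ (𝟙 X ⊗ₘ b)) ≫ tensorμ X Y X Y
      = tensorμ X X X X ≫ ((𝟙 X ⊗ₘ 𝟙 X) ⊗ₘ (a ⊗ₘ b)) := by
    exact tensorμ_natural (𝟙 X) a (𝟙 X) b
  simp only [Category.assoc]
  rw [reassoc_of% e2]
  have e3 : ((𝟙 X ⊗ₘ 𝟙 X) ⊗ₘ (a ⊗ₘ b)) ≫ (XS.mul ⊗ₘ YS.mul)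
      = (XS.mul ⊗ₘ 𝟙 (X ⊗ X)) ≫ (𝟙 X ⊗ₘ ((a ⊗ₘ b) ≫ YS.mul)) := by
    rw [MonoidalCategory.tensorHom_comp_tensorHom, MonoidalCategory.tensorHom_comp_tensorHom]
    simp [MonoidalCategory.id_tensorHom_id]
  have k := XS.K_pure
  rw [← midSwap_eq]
  symm
  calc (λ_ (𝟙_ C)).inv ≫ (XS.eta ⊗ₘ XS.eta) ≫ midSwap X X X X ≫
        ((𝟙 X ⊗ₘ 𝟙 X) ⊗ₘ (a ⊗ₘ b)) ≫ (XS.mul ⊗ₘ YS.mul)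
      = ((λ_ (𝟙_ C)).inv ≫ (XS.eta ⊗ₘ XS.eta) ≫ midSwap X X X X ≫
          (XS.mul ⊗ₘ 𝟙 (X ⊗ X))) ≫ (𝟙 X ⊗ₘ ((a ⊗ₘ b) ≫ YS.mul)) := by
        rw [e3]; simp only [Category.assoc]
    _ = XS.eta ≫ (𝟙 X ⊗ₘ XS.comul) ≫ (𝟙 X ⊗ₘ ((a ⊗ₘ b) ≫ YS.mul)) := by
        rw [k]; simp only [Category.assoc]
    _ = nm XS (smul XS YS a b) := by
        rw [nm, smul, MonoidalCategory.tensorHom_comp_tensorHom]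
        simp

lemma conj_smul (a b : X ⟶ Y) :
    conjugate D XS YS (smul XS YS a b)
      = smul XS YS (conjugate D XS YS a) (conjugate D XS YS b) := by
  apply nm_inj XS
  rw [nm_conj, nm_smul, nm_conj, nm_conj, dag_smul]
  have e1 : (YS.eta ≫ (D.dag a ⊗ₘ 𝟙 Y)) ⊗ₘ (YS.eta ≫ (D.dag b ⊗ₘ 𝟙 Y))
      = (YS.eta ⊗ₘ YS.eta) ≫ ((D.dag a ⊗ₘ 𝟙 Y) ⊗ₘ (D.dag b ⊗ₘ 𝟙 Y)) := by
    rw [MonoidalCategory.tensorHom_comp_tensorHom]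
  rw [e1, midSwap_eq]
  have e2 : ((D.dag a ⊗ₘ 𝟙 Y) ⊗ₘ (D.dag b ⊗ₘ 𝟙 Y)) ≫ tensorμ X Y X Y
      = tensorμ Y Y Y Y ≫ ((D.dag a ⊗ₘ D.dag b) ⊗ₘ (𝟙 Y ⊗ₘ 𝟙 Y)) := by
    exact tensorμ_natural (D.dag a) (𝟙 Y) (D.dag b) (𝟙 Y)
  simp only [Category.assoc]
  rw [reassoc_of% e2]
  have e3 : ((D.dag a ⊗ₘ D.dag b) ⊗ₘ (𝟙 Y ⊗ₘ 𝟙 Y)) ≫ (XS.mul ⊗ₘ YS.mul)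
      = (𝟙 (Y ⊗ Y) ⊗ₘ YS.mul) ≫ (((D.dag a ⊗ₘ D.dag b) ≫ XS.mul) ⊗ₘ 𝟙 Y) := by
    rw [MonoidalCategory.tensorHom_comp_tensorHom, MonoidalCategory.tensorHom_comp_tensorHom]
    simp [MonoidalCategory.id_tensorHom_id]
  have k := YS.Kstar_pure
  rw [← midSwap_eq]
  symm
  calc (λ_ (𝟙_ C)).inv ≫ (YS.eta ⊗ₘ YS.eta) ≫ midSwap Y Y Y Y ≫
        ((D.dag a ⊗ₘ D.dag b) ⊗ₘ (𝟙 Y ⊗ₘ 𝟙 Y)) ≫ (XS.mul ⊗ₘ YS.mul)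
      = ((λ_ (𝟙_ C)).inv ≫ (YS.eta ⊗ₘ YS.eta) ≫ midSwap Y Y Y Y ≫
          (𝟙 (Y ⊗ Y) ⊗ₘ YS.mul)) ≫ (((D.dag a ⊗ₘ D.dag b) ≫ XS.mul) ⊗ₘ 𝟙 Y) := by
        rw [e3]; simp only [Category.assoc]
    _ = YS.eta ≫ (YS.comul ⊗ₘ 𝟙 Y) ≫ (((D.dag a ⊗ₘ D.dag b) ≫ XS.mul) ⊗ₘ 𝟙 Y) := by
        rw [k]; simp only [Category.assoc]
    _ = YS.eta ≫ ((YS.comul ≫ (D.dag a ⊗ₘ D.dag b) ≫ XS.mul) ⊗ₘ 𝟙 Y) := by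
        simp [MonoidalCategory.tensorHom_comp_tensorHom]

end RelAux
namespace RelAux

variable {D : Dagger C} {X Y : C} (XS : ClassicalStructure D X)
  (YS : ClassicalStructure D Y)

lemma convol_eq (a b : X ⟶ Y) :
    convol D XS YS a b = smul XS YS (conjugate D XS YS a) b := rfl

lemma rel_conj {r : X ⟶ Y} (hr : IsRelation D XS YS r) :
    conjugate D XS YS r = r := by
  have h0 : r = smul XS YS (conjugate D XS YS r) r := hr
  have h1 : conjugate D XS YS r = smul XS YS r (conjugate D XS YS r) := by
    conv_lhs => rw [h0]
    rw [conj_smul, conj_conj]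
  rw [h1, smul_comm, ← h0]

lemma convol_rel_eq {r : X ⟶ Y} (hr : IsRelation D XS YS r) (s : X ⟶ Y) :
    convol D XS YS r s = smul XS YS r s := by
  rw [convol_eq, rel_conj XS YS hr]

end RelAux
/-- on relations `X ⟶ Y`, the relation `r ≤ s iff r = r ⋆ s`
is a partial order: reflexive, transitive and antisymmetric. -/
theorem relation_partial_order {X Y : C} (D : Dagger C)
    (XS : ClassicalStructure D X) (YS : ClassicalStructure D Y) :
    (∀ r : X ⟶ Y, IsRelation D XS YS r → r = convol D XS YS r r) ∧
    (∀ r s t : X ⟶ Y, IsRelation D XS YS r → IsRelation D XS YS s →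
      IsRelation D XS YS t →
      r = convol D XS YS r s → s = convol D XS YS s t → r = convol D XS YS r t) ∧
    (∀ r s : X ⟶ Y, IsRelation D XS YS r → IsRelation D XS YS s →
      r = convol D XS YS r s → s = convol D XS YS s r → r = s) := by
  refine ⟨fun r hr => hr, ?_, ?_⟩
  · intro r s t hr hs ht hrs hst
    rw [RelAux.convol_rel_eq XS YS hr] at hrs ⊢
    rw [RelAux.convol_rel_eq XS YS hs] at hst
    calc r = RelAux.smul XS YS r s := hrs
      _ = RelAux.smul XS YS r (RelAux.smul XS YS s t) := by rw [← hst]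
      _ = RelAux.smul XS YS (RelAux.smul XS YS r s) t := by
          rw [RelAux.smul_assoc]
      _ = RelAux.smul XS YS r t := by rw [← hrs]
  · intro r s hr hs hrs hsr
    rw [RelAux.convol_rel_eq XS YS hr] at hrs
    rw [RelAux.convol_rel_eq XS YS hs] at hsr
    rw [hrs, RelAux.smul_comm, ← hsr]
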